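/- Let G be a finite group of order n ≥ 3, let k ≥ 1, let x ∈ G, and let (a, b) be a uniformly random element of G^k × G^k. For v = (i, j) ∈ V = [k] × [k], let I_v(x) be the indicator of {x = a_i·b_j or x = b_j·a_i}, and let Γ be the graph on V with (i, j) ~ (ℓ, m) iff (i = ℓ and j ≠ m) or (i ≠ ℓ and j = m). Define Δ_I(x) = (1/2)·∑_{v ∈ V} ∑_{u ~ v} E[I_v(x)·I_u(x)] · ∏_{w ~ {v,u}} (1 − E[I_w(x)])^{-1} and Δ*_I(x) = (1/2)·∑_{v ∈ V} ∑_{u ~ v} E[I_v(x)]·E[I_u(x)] · ∏_{w ~ {v,u}} (1 − E[I_w(x)])^{-1}, where w ~ {v,u} means w is adjacent to v or to u. Then both Δ_I(x) ≤ 4·(k³/n²)·exp(6k/(n−2)) and Δ*_I(x) ≤ 4·(k³/n²)·exp(6k/(n−2)). -/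

import Mathlib

open scoped Classical

/-- The adjacency relation of the graph `Γ` on `[k] × [k]`:
`(i, j) ~ (ℓ, m)` iff (`i = ℓ` and `j ≠ m`) or (`i ≠ ℓ` and `j = m`). -/
def GammaAdj {k : ℕ} (v u : Fin k × Fin k) : Prop :=
  (v.1 = u.1 ∧ v.2 ≠ u.2) ∨ (v.1 ≠ u.1 ∧ v.2 = u.2)

open Classical in
/-- The indicator `I_v(x)` of the event `{x = a_i·b_j or x = b_j·a_i}`, for `v = (i, j)`,
as a function of the sample point `ω = (a, b) ∈ G^k × G^k`. -/
noncomputable def indicI (G : Type*) [Group G] {k : ℕ} (v : Fin k × Fin k) (x : G)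
    (ω : (Fin k → G) × (Fin k → G)) : ℝ :=
  if x = ω.1 v.1 * ω.2 v.2 ∨ x = ω.2 v.2 * ω.1 v.1 then 1 else 0

/-- Expectation with respect to the uniform measure on `G^k × G^k`. -/
noncomputable def unifExp (G : Type*) [Fintype G] {k : ℕ}
    (f : (Fin k → G) × (Fin k → G) → ℝ) : ℝ :=
  (∑ ω : (Fin k → G) × (Fin k → G), f ω) / (Fintype.card ((Fin k → G) × (Fin k → G)) : ℝ)

/-- `Δ_I(x)` of Suen's inequality for the family `{I_v(x)}_{v ∈ V}` and the dependency
graph `Γ`. -/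
noncomputable def DeltaI (G : Type*) [Group G] [Fintype G] (k : ℕ) (x : G) : ℝ :=
  (1/2) * ∑ v : Fin k × Fin k, ∑ u ∈ Finset.univ.filter (fun u => GammaAdj v u),
    unifExp G (fun ω => indicI G v x ω * indicI G u x ω) *
      ∏ w ∈ Finset.univ.filter (fun w => GammaAdj w v ∨ GammaAdj w u),
        (1 - unifExp G (indicI G w x))⁻¹

/-- `Δ*_I(x)` of Suen's inequality for the family `{I_v(x)}_{v ∈ V}` and the dependency
graph `Γ`. -/
noncomputable def DeltaIStar (G : Type*) [Group G] [Fintype G] (k : ℕ) (x : G) : ℝ :=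
  (1/2) * ∑ v : Fin k × Fin k, ∑ u ∈ Finset.univ.filter (fun u => GammaAdj v u),
    unifExp G (indicI G v x) * unifExp G (indicI G u x) *
      ∏ w ∈ Finset.univ.filter (fun w => GammaAdj w v ∨ GammaAdj w u),
        (1 - unifExp G (indicI G w x))⁻¹

section auxLemmas
set_option linter.unusedSectionVars false
variable {G : Type*} [Group G] [Fintype G]

private lemma card_ne' {ι : Type*} [Fintype ι] [DecidableEq ι] (j : ι) :
    Fintype.card {i : ι // i ≠ j} = Fintype.card ι - 1 := by
  simp [Fintype.card_subtype_compl, Fintype.card_subtype_eq]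

private lemma sum_eval {ι : Type*} [Fintype ι] [DecidableEq ι]
    (j : ι) (f : G → ℝ) :
    ∑ b : ι → G, f (b j) =
      ((Fintype.card G : ℝ) ^ (Fintype.card ι - 1)) * ∑ y : G, f y := by
  rw [← (Equiv.funSplitAt j G).symm.sum_comp (fun b => f (b j))]
  simp only [Equiv.funSplitAt_symm_apply, eq_self_iff_true, dite_true]
  rw [Fintype.sum_prod_type]
  simp only [Finset.sum_const, nsmul_eq_mul, Finset.card_univ, Fintype.card_fun, card_ne' j]
  rw [← Finset.mul_sum]
  push_cast
  ring

private lemma sum_eval_two {ι : Type*} [Fintype ι] [DecidableEq ι]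
    {j m : ι} (hjm : j ≠ m) (f g : G → ℝ) :
    ∑ b : ι → G, f (b j) * g (b m) =
      ((Fintype.card G : ℝ) ^ (Fintype.card ι - 2)) * ((∑ y : G, f y) * ∑ y : G, g y) := by
  rw [← (Equiv.funSplitAt j G).symm.sum_comp (fun b => f (b j) * g (b m))]
  simp only [Equiv.funSplitAt_symm_apply, eq_self_iff_true, dite_true, dif_neg hjm.symm]
  rw [Fintype.sum_prod_type]
  have h2 : ∀ y : G, ∑ r : {i : ι // i ≠ j} → G, f y * g (r ⟨m, hjm.symm⟩) =
      f y * (((Fintype.card G : ℝ) ^ (Fintype.card ι - 2)) * ∑ z : G, g z) := by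
    intro y
    rw [← Finset.mul_sum, sum_eval (⟨m, hjm.symm⟩ : {i : ι // i ≠ j}) g, card_ne' j, Nat.sub_sub]
  simp only [h2]
  rw [← Finset.sum_mul]
  ring

private lemma sum_ite_mem_le (p : G → Prop) [DecidablePred p] (s : Finset G)
    (h : ∀ y, p y → y ∈ s) :
    ∑ y : G, (if p y then (1:ℝ) else 0) ≤ s.card := by
  rw [Finset.sum_boole]
  exact_mod_cast Finset.card_le_card (fun y hy => h y (Finset.mem_filter.mp hy).2)

private lemma sum_pair_le (x a : G) :
    ∑ y : G, (if x = a * y ∨ x = y * a then (1:ℝ) else 0) ≤ 2 := by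
  refine (sum_ite_mem_le _ ({a⁻¹ * x, x * a⁻¹} : Finset G) ?_).trans ?_
  · intro y hy
    rcases hy with h | h
    · simp only [Finset.mem_insert, Finset.mem_singleton]
      left; rw [h]; group
    · simp only [Finset.mem_insert, Finset.mem_singleton]
      right; rw [h]; group
  · exact_mod_cast (Finset.card_insert_le _ _).trans (by simp)

private lemma sum_pair_le' (x a : G) :
    ∑ y : G, (if x = y * a ∨ x = a * y then (1:ℝ) else 0) ≤ 2 := by
  refine (sum_ite_mem_le _ ({a⁻¹ * x, x * a⁻¹} : Finset G) ?_).trans ?_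
  · intro y hy
    rcases hy with h | h
    · simp only [Finset.mem_insert, Finset.mem_singleton]
      right; rw [h]; group
    · simp only [Finset.mem_insert, Finset.mem_singleton]
      left; rw [h]; group
  · exact_mod_cast (Finset.card_insert_le _ _).trans (by simp)

private lemma card_omega (k : ℕ) :
    (Fintype.card ((Fin k → G) × (Fin k → G)) : ℝ)
      = (Fintype.card G : ℝ) ^ k * (Fintype.card G : ℝ) ^ k := by
  simp only [Fintype.card_prod, Fintype.card_fun, Fintype.card_fin]
  push_cast; ring

private lemma indicI_nonneg {k : ℕ} (v : Fin k × Fin k) (x : G)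
    (ω : (Fin k → G) × (Fin k → G)) : 0 ≤ indicI G v x ω := by
  unfold indicI; split_ifs <;> norm_num

private lemma unifExp_nonneg {k : ℕ} (f : (Fin k → G) × (Fin k → G) → ℝ)
    (hf : ∀ ω, 0 ≤ f ω) : 0 ≤ unifExp G f :=
  div_nonneg (Finset.sum_nonneg fun ω _ => hf ω) (Nat.cast_nonneg _)

private lemma unifExp_le {k : ℕ} (f : (Fin k → G) × (Fin k → G) → ℝ) (c : ℝ)
    (h : ∑ ω : (Fin k → G) × (Fin k → G), f ω
        ≤ c * ((Fintype.card G : ℝ) ^ k * (Fintype.card G : ℝ) ^ k)) :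
    unifExp G f ≤ c := by
  have hpos : (0:ℝ) < (Fintype.card ((Fin k → G) × (Fin k → G)) : ℝ) := by
    exact_mod_cast Fintype.card_pos
  rw [unifExp, div_le_iff₀ hpos, card_omega]
  exact h

private lemma exp_indic_le {k : ℕ} (hk : 1 ≤ k) (v : Fin k × Fin k) (x : G) :
    unifExp G (indicI G v x) ≤ 2 / (Fintype.card G : ℝ) := by
  have hn : (0:ℝ) < (Fintype.card G : ℝ) := by exact_mod_cast Fintype.card_pos
  apply unifExp_le
  have hpow : ((Fintype.card G : ℝ)) ^ k
      = (Fintype.card G : ℝ) ^ (k - 1) * (Fintype.card G : ℝ) := by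
    conv_lhs => rw [show k = (k - 1) + 1 from (Nat.succ_pred_eq_of_pos hk).symm]
    rw [pow_succ]
  rw [Fintype.sum_prod_type]
  have h1 : ∀ a : Fin k → G, ∑ b : Fin k → G, indicI G v x (a, b)
      ≤ (Fintype.card G : ℝ) ^ (k - 1) * 2 := by
    intro a
    have he := sum_eval (G := G) v.2
      (fun y => if x = a v.1 * y ∨ x = y * a v.1 then (1:ℝ) else 0)
    simp only [Fintype.card_fin] at he
    simp only [indicI]
    rw [he]
    exact mul_le_mul_of_nonneg_left (sum_pair_le x (a v.1)) (by positivity)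
  calc ∑ a : Fin k → G, ∑ b : Fin k → G, indicI G v x (a, b)
      ≤ ∑ _a : Fin k → G, (Fintype.card G : ℝ) ^ (k - 1) * 2 :=
        Finset.sum_le_sum fun a _ => h1 a
    _ = (Fintype.card G : ℝ) ^ k * ((Fintype.card G : ℝ) ^ (k - 1) * 2) := by
        simp [Finset.sum_const, Fintype.card_fun]
    _ ≤ 2 / (Fintype.card G : ℝ) * ((Fintype.card G : ℝ) ^ k * (Fintype.card G : ℝ) ^ k) := by
        rw [hpow]; rw [div_mul_eq_mul_div, le_div_iff₀ hn]
        exact le_of_eq (by ring)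

private lemma exp_pair_le {k : ℕ} {v u : Fin k × Fin k} (h : GammaAdj v u) (x : G) :
    unifExp G (fun ω => indicI G v x ω * indicI G u x ω)
      ≤ 4 / (Fintype.card G : ℝ) ^ 2 := by
  have hn : (0:ℝ) < (Fintype.card G : ℝ) := by exact_mod_cast Fintype.card_pos
  apply unifExp_le
  rcases h with ⟨h1, h2⟩ | ⟨h1, h2⟩
  · have hk2 : 2 ≤ k := by
      by_contra hlt
      push_neg at hlt
      interval_cases k
      · exact absurd v.2.2 (by omega)
      · exact h2 (Subsingleton.elim _ _)
    have hpow : ((Fintype.card G : ℝ)) ^ k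
        = (Fintype.card G : ℝ) ^ (k - 2) * (Fintype.card G : ℝ) ^ 2 := by
      rw [← pow_add]
      congr 1
      omega
    rw [Fintype.sum_prod_type]
    have hin : ∀ a : Fin k → G,
        ∑ b : Fin k → G, indicI G v x (a, b) * indicI G u x (a, b)
          ≤ (Fintype.card G : ℝ) ^ (k - 2) * 4 := by
      intro a
      have he := sum_eval_two (G := G) h2
        (fun y => if x = a v.1 * y ∨ x = y * a v.1 then (1:ℝ) else 0)
        (fun y => if x = a u.1 * y ∨ x = y * a u.1 then (1:ℝ) else 0)
      simp only [Fintype.card_fin] at he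
      simp only [indicI]
      rw [he]
      have b1 := sum_pair_le x (a v.1)
      have b2 := sum_pair_le x (a u.1)
      have n2 : (0:ℝ) ≤ ∑ y : G, (if x = a u.1 * y ∨ x = y * a u.1 then (1:ℝ) else 0) :=
        Finset.sum_nonneg fun y _ => by split_ifs <;> norm_num
      have hq : (∑ y : G, (if x = a v.1 * y ∨ x = y * a v.1 then (1:ℝ) else 0)) *
          (∑ y : G, (if x = a u.1 * y ∨ x = y * a u.1 then (1:ℝ) else 0)) ≤ 4 := by
        calc _ ≤ (2:ℝ) * 2 := mul_le_mul b1 b2 n2 (by norm_num)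
          _ = 4 := by norm_num
      exact mul_le_mul_of_nonneg_left hq (by positivity)
    calc ∑ a : Fin k → G, ∑ b : Fin k → G, indicI G v x (a, b) * indicI G u x (a, b)
        ≤ ∑ _a : Fin k → G, (Fintype.card G : ℝ) ^ (k - 2) * 4 :=
          Finset.sum_le_sum fun a _ => hin a
      _ = (Fintype.card G : ℝ) ^ k * ((Fintype.card G : ℝ) ^ (k - 2) * 4) := by
          simp [Finset.sum_const, Fintype.card_fun]
      _ ≤ 4 / (Fintype.card G : ℝ) ^ 2 * ((Fintype.card G : ℝ) ^ k * (Fintype.card G : ℝ) ^ k) := by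
          rw [hpow, div_mul_eq_mul_div, le_div_iff₀ (by positivity)]
          exact le_of_eq (by ring)
  · have hk2 : 2 ≤ k := by
      by_contra hlt
      push_neg at hlt
      interval_cases k
      · exact absurd v.1.2 (by omega)
      · exact h1 (Subsingleton.elim _ _)
    have hpow : ((Fintype.card G : ℝ)) ^ k
        = (Fintype.card G : ℝ) ^ (k - 2) * (Fintype.card G : ℝ) ^ 2 := by
      rw [← pow_add]; congr 1; omega
    rw [Fintype.sum_prod_type_right]
    have hin : ∀ b : Fin k → G,
        ∑ a : Fin k → G, indicI G v x (a, b) * indicI G u x (a, b)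
          ≤ (Fintype.card G : ℝ) ^ (k - 2) * 4 := by
      intro b
      have he := sum_eval_two (G := G) h1
        (fun t => if x = t * b v.2 ∨ x = b v.2 * t then (1:ℝ) else 0)
        (fun t => if x = t * b u.2 ∨ x = b u.2 * t then (1:ℝ) else 0)
      simp only [Fintype.card_fin] at he
      simp only [indicI]
      rw [he]
      have b1 := sum_pair_le' x (b v.2)
      have b2 := sum_pair_le' x (b u.2)
      have n2 : (0:ℝ) ≤ ∑ t : G, (if x = t * b u.2 ∨ x = b u.2 * t then (1:ℝ) else 0) :=
        Finset.sum_nonneg fun y _ => by split_ifs <;> norm_num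
      have hq : (∑ t : G, (if x = t * b v.2 ∨ x = b v.2 * t then (1:ℝ) else 0)) *
          (∑ t : G, (if x = t * b u.2 ∨ x = b u.2 * t then (1:ℝ) else 0)) ≤ 4 := by
        calc _ ≤ (2:ℝ) * 2 := mul_le_mul b1 b2 n2 (by norm_num)
          _ = 4 := by norm_num
      exact mul_le_mul_of_nonneg_left hq (by positivity)
    calc ∑ b : Fin k → G, ∑ a : Fin k → G, indicI G v x (a, b) * indicI G u x (a, b)
        ≤ ∑ _b : Fin k → G, (Fintype.card G : ℝ) ^ (k - 2) * 4 :=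
          Finset.sum_le_sum fun b _ => hin b
      _ = (Fintype.card G : ℝ) ^ k * ((Fintype.card G : ℝ) ^ (k - 2) * 4) := by
          simp [Finset.sum_const, Fintype.card_fun]
      _ ≤ 4 / (Fintype.card G : ℝ) ^ 2 * ((Fintype.card G : ℝ) ^ k * (Fintype.card G : ℝ) ^ k) := by
          rw [hpow, div_mul_eq_mul_div, le_div_iff₀ (by positivity)]
          exact le_of_eq (by ring)

private lemma mem_row {k : ℕ} {w : Fin k × Fin k} {c : Fin k} (h : w.1 = c) :
    w ∈ ({c} ×ˢ Finset.univ : Finset (Fin k × Fin k)) :=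
  Finset.mem_product.mpr ⟨by simp [h], Finset.mem_univ _⟩

private lemma mem_col {k : ℕ} {w : Fin k × Fin k} {c : Fin k} (h : w.2 = c) :
    w ∈ (Finset.univ ×ˢ {c} : Finset (Fin k × Fin k)) :=
  Finset.mem_product.mpr ⟨Finset.mem_univ _, by simp [h]⟩

private lemma card_row {k : ℕ} (c : Fin k) :
    (({c} ×ˢ (Finset.univ : Finset (Fin k))) : Finset (Fin k × Fin k)).card = k := by
  simp [Finset.card_product]

private lemma card_col {k : ℕ} (c : Fin k) :
    (((Finset.univ : Finset (Fin k)) ×ˢ {c}) : Finset (Fin k × Fin k)).card = k := by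
  simp [Finset.card_product]

private lemma card_adj_le {k : ℕ} (v : Fin k × Fin k) :
    ((Finset.univ.filter (fun u => GammaAdj v u)) : Finset (Fin k × Fin k)).card ≤ 2 * k := by
  have hsub : (Finset.univ.filter (fun u => GammaAdj v u))
      ⊆ ({v.1} ×ˢ Finset.univ) ∪ (Finset.univ ×ˢ {v.2}) := by
    intro u hu
    rw [Finset.mem_filter] at hu
    rcases hu.2 with ⟨h1, _⟩ | ⟨_, h2⟩
    · exact Finset.mem_union_left _ (mem_row h1.symm)
    · exact Finset.mem_union_right _ (mem_col h2.symm)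
  calc _ ≤ _ := Finset.card_le_card hsub
    _ ≤ (({v.1} ×ˢ Finset.univ : Finset (Fin k × Fin k))).card
        + ((Finset.univ ×ˢ {v.2} : Finset (Fin k × Fin k))).card := Finset.card_union_le _ _
    _ = 2 * k := by rw [card_row, card_col]; ring

private lemma card_nbhd_le {k : ℕ} {v u : Fin k × Fin k} (h : GammaAdj v u) :
    ((Finset.univ.filter (fun w => GammaAdj w v ∨ GammaAdj w u)) : Finset (Fin k × Fin k)).card
      ≤ 3 * k := by
  rcases h with ⟨h1, _⟩ | ⟨_, h2⟩
  · have hsub : (Finset.univ.filter (fun w => GammaAdj w v ∨ GammaAdj w u))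
        ⊆ ({v.1} ×ˢ Finset.univ) ∪ ((Finset.univ ×ˢ {v.2}) ∪ (Finset.univ ×ˢ {u.2})) := by
      intro w hw
      rw [Finset.mem_filter] at hw
      rcases hw.2 with hadj | hadj <;> rcases hadj with ⟨ha, _⟩ | ⟨_, hb⟩
      · exact Finset.mem_union_left _ (mem_row ha)
      · exact Finset.mem_union_right _ (Finset.mem_union_left _ (mem_col hb))
      · exact Finset.mem_union_left _ (mem_row (ha.trans h1.symm))
      · exact Finset.mem_union_right _ (Finset.mem_union_right _ (mem_col hb))
    calc _ ≤ _ := Finset.card_le_card hsub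
      _ ≤ (({v.1} ×ˢ Finset.univ : Finset (Fin k × Fin k))).card
          + ((Finset.univ ×ˢ {v.2} : Finset (Fin k × Fin k)) ∪ (Finset.univ ×ˢ {u.2})).card :=
            Finset.card_union_le _ _
      _ ≤ (({v.1} ×ˢ Finset.univ : Finset (Fin k × Fin k))).card
          + (((Finset.univ ×ˢ {v.2} : Finset (Fin k × Fin k))).card
            + ((Finset.univ ×ˢ {u.2} : Finset (Fin k × Fin k))).card) :=
            Nat.add_le_add_left (Finset.card_union_le _ _) _
      _ = 3 * k := by rw [card_row, card_col, card_col]; ring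
  · have hsub : (Finset.univ.filter (fun w => GammaAdj w v ∨ GammaAdj w u))
        ⊆ (Finset.univ ×ˢ {v.2}) ∪ (({v.1} ×ˢ Finset.univ) ∪ ({u.1} ×ˢ Finset.univ)) := by
      intro w hw
      rw [Finset.mem_filter] at hw
      rcases hw.2 with hadj | hadj <;> rcases hadj with ⟨ha, _⟩ | ⟨_, hb⟩
      · exact Finset.mem_union_right _ (Finset.mem_union_left _ (mem_row ha))
      · exact Finset.mem_union_left _ (mem_col hb)
      · exact Finset.mem_union_right _ (Finset.mem_union_right _ (mem_row ha))
      · exact Finset.mem_union_left _ (mem_col (hb.trans h2.symm))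
    calc _ ≤ _ := Finset.card_le_card hsub
      _ ≤ ((Finset.univ ×ˢ {v.2} : Finset (Fin k × Fin k))).card
          + (({v.1} ×ˢ Finset.univ : Finset (Fin k × Fin k)) ∪ ({u.1} ×ˢ Finset.univ)).card :=
            Finset.card_union_le _ _
      _ ≤ ((Finset.univ ×ˢ {v.2} : Finset (Fin k × Fin k))).card
          + ((({v.1} ×ˢ Finset.univ : Finset (Fin k × Fin k))).card
            + (({u.1} ×ˢ Finset.univ : Finset (Fin k × Fin k))).card) :=
            Nat.add_le_add_left (Finset.card_union_le _ _) _
      _ = 3 * k := by rw [card_col, card_row, card_row]; ring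

private lemma prod_bound (hG : 3 ≤ Fintype.card G) {k : ℕ} (hk : 1 ≤ k) (x : G)
    {v u : Fin k × Fin k} (h : GammaAdj v u) :
    0 ≤ (∏ w ∈ Finset.univ.filter (fun w => GammaAdj w v ∨ GammaAdj w u),
        (1 - unifExp G (indicI G w x))⁻¹) ∧
    (∏ w ∈ Finset.univ.filter (fun w => GammaAdj w v ∨ GammaAdj w u),
        (1 - unifExp G (indicI G w x))⁻¹)
      ≤ Real.exp (6 * k / ((Fintype.card G : ℝ) - 2)) := by
  set n : ℝ := (Fintype.card G : ℝ) with hn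
  have hn3 : (3:ℝ) ≤ n := by rw [hn]; exact_mod_cast hG
  have hn2 : (0:ℝ) < n - 2 := by linarith
  have hnpos : (0:ℝ) < n := by linarith
  have hfrac : 2 / n < 1 := by rw [div_lt_one hnpos]; linarith
  have hEw : ∀ w : Fin k × Fin k, 0 < 1 - unifExp G (indicI G w x) := by
    intro w
    have := exp_indic_le (G := G) hk w x
    linarith
  have hfac : ∀ w : Fin k × Fin k,
      (1 - unifExp G (indicI G w x))⁻¹ ≤ Real.exp (2 / (n - 2)) := by
    intro w
    have h1 : (1 - unifExp G (indicI G w x))⁻¹ ≤ (1 - 2 / n)⁻¹ := by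
      apply inv_anti₀ (by linarith)
      have := exp_indic_le (G := G) hk w x
      linarith
    have h2 : (1 - 2 / n)⁻¹ = 1 + 2 / (n - 2) := by
      field_simp
      ring
    have h3 : 1 + 2 / (n - 2) ≤ Real.exp (2 / (n - 2)) := by
      have := Real.add_one_le_exp (2 / (n - 2))
      linarith
    linarith
  have hfac0 : ∀ w : Fin k × Fin k, (0:ℝ) ≤ (1 - unifExp G (indicI G w x))⁻¹ :=
    fun w => inv_nonneg.mpr (hEw w).le
  constructor
  · exact Finset.prod_nonneg fun w _ => hfac0 w
  · have hexp1 : (1:ℝ) ≤ Real.exp (2 / (n - 2)) :=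
      Real.one_le_exp (by positivity)
    calc (∏ w ∈ Finset.univ.filter (fun w => GammaAdj w v ∨ GammaAdj w u),
          (1 - unifExp G (indicI G w x))⁻¹)
        ≤ ∏ _w ∈ Finset.univ.filter (fun w => GammaAdj w v ∨ GammaAdj w u),
            Real.exp (2 / (n - 2)) :=
          Finset.prod_le_prod (fun w _ => hfac0 w) (fun w _ => hfac w)
      _ = Real.exp (2 / (n - 2)) ^
            (Finset.univ.filter (fun w => GammaAdj w v ∨ GammaAdj w u)).card :=
          Finset.prod_const _
      _ ≤ Real.exp (2 / (n - 2)) ^ (3 * k) :=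
          pow_le_pow_right₀ hexp1 (card_nbhd_le h)
      _ = Real.exp ((3 * k : ℕ) * (2 / (n - 2))) := by rw [← Real.exp_nat_mul]
      _ = Real.exp (6 * k / (n - 2)) := by
          congr 1
          push_cast
          ring

private lemma delta_sum_le {k : ℕ} (t : (Fin k × Fin k) → (Fin k × Fin k) → ℝ) (B : ℝ)
    (hB : 0 ≤ B) (ht : ∀ v u, GammaAdj v u → t v u ≤ B) :
    (1/2) * ∑ v : Fin k × Fin k, ∑ u ∈ Finset.univ.filter (fun u => GammaAdj v u), t v u
      ≤ (1/2) * ((k : ℝ) * k) * ((2 * k) * B) := by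
  have hinner : ∀ v : Fin k × Fin k,
      ∑ u ∈ Finset.univ.filter (fun u => GammaAdj v u), t v u ≤ (2 * (k:ℝ)) * B := by
    intro v
    calc ∑ u ∈ Finset.univ.filter (fun u => GammaAdj v u), t v u
        ≤ (Finset.univ.filter (fun u => GammaAdj v u)).card • B :=
          Finset.sum_le_card_nsmul _ _ _
            (fun u hu => ht v u (Finset.mem_filter.mp hu).2)
      _ = ((Finset.univ.filter (fun u => GammaAdj v u)).card : ℝ) * B := nsmul_eq_mul _ _
      _ ≤ (2 * (k:ℝ)) * B := by
          apply mul_le_mul_of_nonneg_right _ hB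
          exact_mod_cast card_adj_le v
  calc (1/2) * ∑ v : Fin k × Fin k, ∑ u ∈ Finset.univ.filter (fun u => GammaAdj v u), t v u
      ≤ (1/2) * ((Finset.univ : Finset (Fin k × Fin k)).card • ((2 * (k:ℝ)) * B)) := by
        apply mul_le_mul_of_nonneg_left _ (by norm_num)
        exact Finset.sum_le_card_nsmul _ _ _ (fun v _ => hinner v)
    _ = (1/2) * ((k : ℝ) * k) * ((2 * k) * B) := by
        simp only [Finset.card_univ, Fintype.card_prod, Fintype.card_fin, nsmul_eq_mul]
        push_cast
        ring

end auxLemmas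

/-- Both `Δ_I(x)` and `Δ*_I(x)` are at most `4·(k³/n²)·exp(6k/(n−2))`. -/
theorem delta_bounds (G : Type*) [Group G] [Fintype G] (hG : 3 ≤ Fintype.card G)
    (k : ℕ) (hk : 1 ≤ k) (x : G) :
    DeltaI G k x ≤
      4 * ((k : ℝ) ^ 3 / (Fintype.card G : ℝ) ^ 2) *
        Real.exp (6 * k / ((Fintype.card G : ℝ) - 2)) ∧
    DeltaIStar G k x ≤
      4 * ((k : ℝ) ^ 3 / (Fintype.card G : ℝ) ^ 2) *
        Real.exp (6 * k / ((Fintype.card G : ℝ) - 2)) := by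
  have hn3 : (3:ℝ) ≤ (Fintype.card G : ℝ) := by exact_mod_cast hG
  have hnpos : (0:ℝ) < (Fintype.card G : ℝ) := by linarith
  have hB : (0:ℝ) ≤ 4 / (Fintype.card G : ℝ) ^ 2
      * Real.exp (6 * k / ((Fintype.card G : ℝ) - 2)) := by positivity
  have hEq : (1/2) * ((k : ℝ) * k) * ((2 * k) * (4 / (Fintype.card G : ℝ) ^ 2
        * Real.exp (6 * k / ((Fintype.card G : ℝ) - 2))))
      = 4 * ((k : ℝ) ^ 3 / (Fintype.card G : ℝ) ^ 2)
        * Real.exp (6 * k / ((Fintype.card G : ℝ) - 2)) := by ring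
  constructor
  · unfold DeltaI
    refine le_trans (delta_sum_le _ _ hB ?_) (le_of_eq hEq)
    intro v u hadj
    have hp := prod_bound hG hk x hadj
    exact mul_le_mul (exp_pair_le hadj x) hp.2 hp.1 (by positivity)
  · unfold DeltaIStar
    refine le_trans (delta_sum_le _ _ hB ?_) (le_of_eq hEq)
    intro v u hadj
    have hp := prod_bound hG hk x hadj
    have h1 := exp_indic_le (G := G) hk v x
    have h2 := exp_indic_le (G := G) hk u x
    have hun : 0 ≤ unifExp G (indicI G u x) :=
      unifExp_nonneg (G := G) (indicI G u x) (indicI_nonneg u x)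
    have hmul : unifExp G (indicI G v x) * unifExp G (indicI G u x)
        ≤ 4 / (Fintype.card G : ℝ) ^ 2 := by
      calc _ ≤ (2 / (Fintype.card G : ℝ)) * (2 / (Fintype.card G : ℝ)) :=
            mul_le_mul h1 h2 hun (by positivity)
        _ = 4 / (Fintype.card G : ℝ) ^ 2 := by ring
    exact mul_le_mul hmul hp.2 hp.1 (by positivity)
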